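/- Let d_a, d_b ≥ 1 and let ρ be a PSD matrix indexed by (Fin d_a) × (Fin d_b) with trace 1 such that ρ_b := Tr_a(ρ) is positive definite. Let Q be any positive definite Hermitian d_b×d_b matrix with Q·ρ_b·Q = I, and set ρ̄ := (1/d_b)·(I ⊗ Q)·ρ·(I ⊗ Q). Then Tr_a(ρ̄) = (1/d_b)·I, and ρ is separable if and only if ρ̄ is separable. -/
import Mathlib


open Matrix
open scoped Kronecker ComplexOrder

/-- Partial trace over the first factor. -/
noncomputable def TrA (da db : ℕ) (M : Matrix (Fin da × Fin db) (Fin da × Fin db) ℂ) :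
    Matrix (Fin db) (Fin db) ℂ :=
  fun b b' => ∑ a : Fin da, M (a, b) (a, b')

/-- A matrix is separable if it is a nonnegative combination of Kronecker products of
rank-one projectors. -/
def Separable (da db : ℕ) (ρ : Matrix (Fin da × Fin db) (Fin da × Fin db) ℂ) : Prop :=
  ∃ (n : ℕ) (w : Fin n → ℝ) (x : Fin n → Fin da → ℂ) (y : Fin n → Fin db → ℂ),
    (∀ i, 0 ≤ w i) ∧
    ρ = ∑ i : Fin n, ((w i : ℝ) : ℂ) •
      (Matrix.vecMulVec (x i) (star (x i)) ⊗ₖ Matrix.vecMulVec (y i) (star (y i)))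

lemma kq_mul (da db : ℕ) (Q : Matrix (Fin db) (Fin db) ℂ)
    (M : Matrix (Fin da × Fin db) (Fin da × Fin db) ℂ) (a c : Fin da) (b d : Fin db) :
    (((1 : Matrix (Fin da) (Fin da) ℂ) ⊗ₖ Q) * M) ((a, b)) ((c, d)) =
      ∑ b1, Q b b1 * M (a, b1) (c, d) := by
  simp [mul_apply, Fintype.sum_prod_type, one_apply, ite_mul, zero_mul, one_mul,
    Finset.sum_ite_irrel, Finset.sum_const_zero, Finset.sum_ite_eq]

lemma mul_kq (da db : ℕ) (Q : Matrix (Fin db) (Fin db) ℂ)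
    (M : Matrix (Fin da × Fin db) (Fin da × Fin db) ℂ) (a c : Fin da) (b d : Fin db) :
    (M * ((1 : Matrix (Fin da) (Fin da) ℂ) ⊗ₖ Q)) ((a, b)) ((c, d)) =
      ∑ b1, M (a, b) (c, b1) * Q b1 d := by
  simp [mul_apply, Fintype.sum_prod_type, one_apply, mul_ite, mul_zero, mul_one,
    Finset.sum_ite_irrel, Finset.sum_const_zero, Finset.sum_ite_eq', ite_mul, zero_mul]

lemma TrA_conj (da db : ℕ) (Q : Matrix (Fin db) (Fin db) ℂ)
    (M : Matrix (Fin da × Fin db) (Fin da × Fin db) ℂ) :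
    TrA da db (((1 : Matrix (Fin da) (Fin da) ℂ) ⊗ₖ Q) * M *
      ((1 : Matrix (Fin da) (Fin da) ℂ) ⊗ₖ Q)) = Q * TrA da db M * Q := by
  have h2 : (Q * TrA da db M * Q) =
      ∑ x : Fin da, Q * (Matrix.of fun p q => M (x, p) (x, q)) * Q := by
    rw [← Finset.sum_mul, ← Finset.mul_sum]
    congr 1; congr 1
    ext p q
    simp only [Matrix.sum_apply]
    simp [TrA]
  ext b b'
  rw [h2]
  simp only [Matrix.sum_apply]
  simp only [TrA, mul_kq, kq_mul]
  refine Finset.sum_congr rfl fun x _ => ?_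
  simp [mul_apply]

lemma QvvQ {db : ℕ} (Q : Matrix (Fin db) (Fin db) ℂ) (hQ : Q.IsHermitian) (y : Fin db → ℂ) :
    Q * vecMulVec y (star y) * Q = vecMulVec (Q *ᵥ y) (star (Q *ᵥ y)) := by
  have hQ' : ∀ i j, star (Q i j) = Q j i := fun i j => by
    have := congrFun (congrFun hQ.eq j) i
    simpa [conjTranspose_apply] using this
  ext b b'
  simp only [mul_apply, vecMulVec_apply, mulVec, dotProduct, Pi.star_apply, star_sum, star_mul',
    hQ', Finset.sum_mul, Finset.mul_sum]
  refine Finset.sum_congr rfl fun j _ => Finset.sum_congr rfl fun i _ => by ring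

lemma sep_conj (da db : ℕ) (Q : Matrix (Fin db) (Fin db) ℂ) (hQ : Q.IsHermitian)
    (c : ℝ) (hc : 0 ≤ c) (ρ : Matrix (Fin da × Fin db) (Fin da × Fin db) ℂ)
    (h : Separable da db ρ) :
    Separable da db (((c : ℝ) : ℂ) •
      (((1 : Matrix (Fin da) (Fin da) ℂ) ⊗ₖ Q) * ρ * ((1 : Matrix (Fin da) (Fin da) ℂ) ⊗ₖ Q))) := by
  obtain ⟨n, w, x, y, hw, rfl⟩ := h
  refine ⟨n, fun i => c * w i, x, fun i => Q *ᵥ y i, fun i => mul_nonneg hc (hw i), ?_⟩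
  rw [Finset.mul_sum, Finset.sum_mul, Finset.smul_sum]
  refine Finset.sum_congr rfl fun i _ => ?_
  rw [mul_smul_comm, smul_mul_assoc, smul_smul, ← mul_kronecker_mul, ← mul_kronecker_mul,
    one_mul, mul_one, QvvQ Q hQ]
  push_cast
  ring_nf

theorem stmt19 (da db : ℕ) (hda : 0 < da) (hdb : 0 < db)
    (ρ : Matrix (Fin da × Fin db) (Fin da × Fin db) ℂ)
    (hρ : ρ.PosSemidef) (hρtr : ρ.trace = 1)
    (hb : (TrA da db ρ).PosDef)
    (Q : Matrix (Fin db) (Fin db) ℂ) (hQ : Q.PosDef)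
    (hQI : Q * TrA da db ρ * Q = 1)
    (ρbar : Matrix (Fin da × Fin db) (Fin da × Fin db) ℂ)
    (hbar : ρbar = ((db : ℂ))⁻¹ •
      (((1 : Matrix (Fin da) (Fin da) ℂ) ⊗ₖ Q) * ρ * ((1 : Matrix (Fin da) (Fin da) ℂ) ⊗ₖ Q))) :
    TrA da db ρbar = ((db : ℂ))⁻¹ • (1 : Matrix (Fin db) (Fin db) ℂ) ∧
    (Separable da db ρ ↔ Separable da db ρbar) := by
  have hdb' : (db : ℂ) ≠ 0 := Nat.cast_ne_zero.mpr hdb.ne'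
  have hdet : IsUnit Q.det := isUnit_iff_ne_zero.mpr hQ.det_pos.ne'
  have hcast : ((db : ℂ))⁻¹ = (((db : ℝ)⁻¹ : ℝ) : ℂ) := by push_cast; ring
  constructor
  · have hsm : TrA da db ρbar = ((db : ℂ))⁻¹ • TrA da db
        (((1 : Matrix (Fin da) (Fin da) ℂ) ⊗ₖ Q) * ρ * ((1 : Matrix (Fin da) (Fin da) ℂ) ⊗ₖ Q)) := by
      subst hbar
      ext b b'
      simp [TrA, Finset.mul_sum]
    rw [hsm, TrA_conj, hQI]
  · constructor
    · intro h
      rw [hbar, hcast]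
      exact sep_conj da db Q hQ.1 _ (by positivity) ρ h
    · intro h
      have h1 : ((1 : Matrix (Fin da) (Fin da) ℂ) ⊗ₖ Q⁻¹) * ((1 : Matrix (Fin da) (Fin da) ℂ) ⊗ₖ Q)
          = 1 := by
        rw [← mul_kronecker_mul, one_mul, nonsing_inv_mul _ hdet, one_kronecker_one]
      have h2 : ((1 : Matrix (Fin da) (Fin da) ℂ) ⊗ₖ Q) * ((1 : Matrix (Fin da) (Fin da) ℂ) ⊗ₖ Q⁻¹)
          = 1 := by
        rw [← mul_kronecker_mul, one_mul, mul_nonsing_inv _ hdet, one_kronecker_one]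
      have key : (((db : ℝ) : ℂ)) •
          (((1 : Matrix (Fin da) (Fin da) ℂ) ⊗ₖ Q⁻¹) * ρbar *
            ((1 : Matrix (Fin da) (Fin da) ℂ) ⊗ₖ Q⁻¹)) = ρ := by
        subst hbar
        rw [mul_smul_comm, smul_mul_assoc, smul_smul]
        have : (((db : ℝ) : ℂ)) * ((db : ℂ))⁻¹ = 1 := by
          push_cast
          field_simp
        rw [this, one_smul]
        calc ((1 : Matrix (Fin da) (Fin da) ℂ) ⊗ₖ Q⁻¹) *
              (((1 : Matrix (Fin da) (Fin da) ℂ) ⊗ₖ Q) * ρ * ((1 : Matrix (Fin da) (Fin da) ℂ) ⊗ₖ Q)) *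
              ((1 : Matrix (Fin da) (Fin da) ℂ) ⊗ₖ Q⁻¹)
            = (((1 : Matrix (Fin da) (Fin da) ℂ) ⊗ₖ Q⁻¹) * ((1 : Matrix (Fin da) (Fin da) ℂ) ⊗ₖ Q)) *
              ρ * (((1 : Matrix (Fin da) (Fin da) ℂ) ⊗ₖ Q) * ((1 : Matrix (Fin da) (Fin da) ℂ) ⊗ₖ Q⁻¹)) := by
              simp only [Matrix.mul_assoc]
          _ = ρ := by rw [h1, h2, Matrix.one_mul, Matrix.mul_one]
      rw [← key]
      exact sep_conj da db Q⁻¹ hQ.inv.1 _ (by positivity) ρbar h
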